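/- Let A and B be nonempty closed subsets of ℝⁿ and b* ∈ A ∩ B. If B is prox-regular at b*, then for every σ ∈ [0,1) and every c̄ > 0 there exists c ∈ (0, c̄) such that B is σ-Hölder regular with respect to A at b* with constant c. -/

import Mathlib

open Set Metric Filter Topology RealInnerProductSpace
open scoped ENNReal

variable {E : Type*} [NormedAddCommGroup E] [InnerProductSpace ℝ E]

/-- The (possibly set-valued) metric projection onto a set `S`. -/
noncomputable def projSet (S : Set E) (x : E) : Set E :=
  {s | s ∈ S ∧ ‖x - s‖ = Metric.infDist x S}

/-- `B` is prox-regular at `bs`: the projection onto `B` is single-valued near `bs`. -/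
def ProxRegularAt (B : Set E) (bs : E) : Prop :=
  ∃ U ∈ nhds bs, ∀ y ∈ U, ∃ p : E, projSet B y = {p}

/-- `B` is `σ`-Hölder regular with respect to `A` at `bs` with constant `c`. -/
def HolderRegular (A B : Set E) (bs : E) (σ c : ℝ) : Prop :=
  ∃ U ∈ nhds bs, ∀ a' ∈ A ∩ U, ∀ b' ∈ projSet B a' ∩ U, ∀ b ∈ B,
    ‖b - a'‖ ≤ (1 + c) * ‖a' - b'‖ → a' ∈ projSet A b →
    ⟪a' - b', b - b'⟫ ≤ Real.sqrt c * ‖a' - b'‖ ^ (σ + 1) * ‖b - b'‖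

set_option linter.unusedSectionVars false
set_option linter.unusedVariables false
set_option maxHeartbeats 1000000

lemma projSet_nonempty [ProperSpace E] {B : Set E} (hBc : IsClosed B) (hBne : B.Nonempty)
    (x : E) : (projSet B x).Nonempty := by
  obtain ⟨y, hyB, hy⟩ := hBc.exists_infDist_eq_dist hBne x
  exact ⟨y, hyB, by rw [← dist_eq_norm, hy]⟩

lemma infDist_le_norm' {B : Set E} {b : E} (hb : b ∈ B) (x : E) :
    Metric.infDist x B ≤ ‖x - b‖ := by
  rw [← dist_eq_norm]; exact Metric.infDist_le_dist_of_mem hb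

/-- Continuity of the projection at a point with unique projection. -/
lemma proj_cont [ProperSpace E] {B : Set E} (hBc : IsClosed B) {w q : E}
    (huniq : projSet B w = {q}) {ε : ℝ} (hε : 0 < ε) :
    ∃ η > 0, ∀ w', ‖w' - w‖ < η → ∀ q' ∈ projSet B w', ‖q' - q‖ < ε := by
  by_contra hcon
  push_neg at hcon
  have hsel : ∀ m : ℕ, ∃ wq : E × E, ‖wq.1 - w‖ < 1 / (m + 1) ∧ wq.2 ∈ projSet B wq.1 ∧
      ε ≤ ‖wq.2 - q‖ := by
    intro m
    obtain ⟨w', hw', q', hq', hfar⟩ := hcon (1 / (m + 1)) (by positivity)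
    exact ⟨(w', q'), hw', hq', hfar⟩
  choose f hf1 hf2 hf3 using hsel
  have hfB : ∀ m, (f m).2 ∈ B := fun m => (hf2 m).1
  have hfd : ∀ m, ‖(f m).1 - (f m).2‖ = infDist (f m).1 B := fun m => (hf2 m).2
  -- the q-sequence is bounded
  have hbdd : ∀ m, (f m).2 ∈ closedBall w (infDist w B + 2) := by
    intro m
    have h1 : (1 : ℝ) / (m + 1) ≤ 1 := by
      rw [div_le_one (by positivity)]
      have : (0:ℝ) ≤ m := Nat.cast_nonneg m
      linarith
    have h2 : infDist (f m).1 B ≤ infDist w B + dist (f m).1 w := infDist_le_infDist_add_dist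
    have h3 : dist (f m).1 w = ‖(f m).1 - w‖ := dist_eq_norm _ _
    rw [mem_closedBall, dist_eq_norm]
    calc ‖(f m).2 - w‖ ≤ ‖(f m).2 - (f m).1‖ + ‖(f m).1 - w‖ := norm_sub_le_norm_sub_add_norm_sub _ _ _
      _ = ‖(f m).1 - (f m).2‖ + ‖(f m).1 - w‖ := by rw [norm_sub_rev]
      _ ≤ (infDist w B + ‖(f m).1 - w‖) + ‖(f m).1 - w‖ := by
          rw [hfd m]; have := h2; rw [h3] at this; linarith
      _ ≤ infDist w B + 2 := by
          have := le_of_lt (hf1 m); linarith [this.trans h1, (le_of_lt (hf1 m)).trans h1]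
  obtain ⟨qlim, hqlimmem, φ, hφ, hconv⟩ :=
    (isCompact_closedBall w (infDist w B + 2)).tendsto_subseq hbdd
  have hφge : ∀ k : ℕ, (k : ℝ) ≤ (φ k : ℝ) := fun k => by exact_mod_cast hφ.le_apply
  have hzero : Tendsto (fun k : ℕ => (1 : ℝ) / (φ k + 1)) atTop (𝓝 0) := by
    apply squeeze_zero (fun k => by positivity) (g := fun k : ℕ => (1:ℝ)/(k+1))
    · intro k
      apply div_le_div_of_nonneg_left one_pos.le (by positivity)
      have := hφge k; linarith
    · exact tendsto_one_div_add_atTop_nhds_zero_nat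
  -- qlim is a nearest point of w
  have hqlimB : qlim ∈ B := hBc.mem_of_tendsto hconv (Eventually.of_forall fun k => hfB (φ k))
  have hdistle : dist w qlim ≤ infDist w B := by
    have htend : Tendsto (fun k => dist w ((fun m => (f m).2) (φ k))) atTop (𝓝 (dist w qlim)) :=
      tendsto_const_nhds.dist hconv
    have htend2 : Tendsto (fun k : ℕ => infDist w B + 2 * (1 / (φ k + 1 : ℝ))) atTop
        (𝓝 (infDist w B + 2 * 0)) := tendsto_const_nhds.add (tendsto_const_nhds.mul hzero)
    have hle : ∀ k, dist w ((f (φ k)).2) ≤ infDist w B + 2 * (1 / (φ k + 1 : ℝ)) := by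
      intro k
      have h2 : infDist (f (φ k)).1 B ≤ infDist w B + dist (f (φ k)).1 w := infDist_le_infDist_add_dist
      have h3 : dist (f (φ k)).1 w = ‖(f (φ k)).1 - w‖ := dist_eq_norm _ _
      have h4 := le_of_lt (hf1 (φ k))
      calc dist w (f (φ k)).2 ≤ dist w (f (φ k)).1 + dist (f (φ k)).1 (f (φ k)).2 := dist_triangle _ _ _
        _ = ‖(f (φ k)).1 - w‖ + ‖(f (φ k)).1 - (f (φ k)).2‖ := by
            rw [dist_comm w, dist_eq_norm, dist_eq_norm]
        _ ≤ (1 / (φ k + 1 : ℝ)) + infDist (f (φ k)).1 B := by rw [hfd]; linarith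
        _ ≤ (1 / (φ k + 1 : ℝ)) + (infDist w B + (1 / (φ k + 1 : ℝ))) := by
            rw [h3] at h2; linarith
        _ = infDist w B + 2 * (1 / (φ k + 1 : ℝ)) := by ring
    have := le_of_tendsto_of_tendsto' htend htend2 hle
    simpa using this
  have hqlimproj : qlim ∈ projSet B w := by
    refine ⟨hqlimB, ?_⟩
    rw [← dist_eq_norm]
    exact le_antisymm hdistle (infDist_le_dist_of_mem hqlimB)
  have hqlimeq : qlim = q := by
    rw [huniq] at hqlimproj; exact hqlimproj
  have hfar : ε ≤ ‖qlim - q‖ := by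
    have htendn : Tendsto (fun k => ‖(f (φ k)).2 - q‖) atTop (𝓝 ‖qlim - q‖) :=
      ((hconv.sub tendsto_const_nhds).norm)
    exact ge_of_tendsto htendn (Eventually.of_forall fun k => hf3 (φ k))
  rw [hqlimeq, sub_self, norm_zero] at hfar
  linarith

/-- Key reach-type inequality from local uniqueness of projections. -/
lemma reach_ineq [ProperSpace E] {B : Set E} (hBc : IsClosed B) (hBne : B.Nonempty)
    {bs : E} {ε₀ : ℝ} (hε₀ : 0 < ε₀)
    (huniq : ∀ y ∈ closedBall bs ε₀, ∃ p, projSet B y = {p})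
    {a' b' : E} (ha : ‖a' - bs‖ ≤ ε₀ / 4) (hb' : b' ∈ projSet B a') :
    ∀ b ∈ B, ⟪a' - b', b - b'⟫ ≤ ‖a' - b'‖ * ‖b - b'‖ ^ 2 / (2 * (ε₀ / 4)) := by
  intro b hbB
  have hT : 0 < ε₀ / 4 := by linarith
  have hRinf : ‖a' - b'‖ = infDist a' B := hb'.2
  rcases eq_or_lt_of_le (norm_nonneg (a' - b')) with hR0 | hRpos
  · -- degenerate case a' = b'
    have hz : a' - b' = 0 := by rwa [eq_comm, norm_eq_zero] at hR0
    rw [hz, inner_zero_left]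
    exact div_nonneg (mul_nonneg (norm_nonneg _) (sq_nonneg _)) (by linarith)
  · -- main case
    have stepA : ∀ ε : ℝ, 0 < ε → ε < 1 →
        ∃ w, ‖w - a'‖ ≤ ε₀ / 4 ∧ ‖a' - b'‖ + (1 - ε) * (ε₀ / 4) ≤ infDist w B := by
      intro ε hε hε1
      set K₂ : Set (ℝ × E) :=
        {p | p.1 ∈ Icc (0:ℝ) (ε₀ / 4) ∧ ‖p.2 - a'‖ ≤ p.1 ∧
          ‖a' - b'‖ + (1 - ε) * p.1 ≤ infDist p.2 B} with hK₂def
      have hK₂closed : IsClosed K₂ := by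
        have hEq : K₂ = (Prod.fst ⁻¹' Icc (0:ℝ) (ε₀ / 4)) ∩
            ({p : ℝ × E | ‖p.2 - a'‖ ≤ p.1} ∩
             {p : ℝ × E | ‖a' - b'‖ + (1 - ε) * p.1 ≤ infDist p.2 B}) := by
          ext p; simp [hK₂def, and_assoc]
        rw [hEq]
        refine (isClosed_Icc.preimage continuous_fst).inter (IsClosed.inter ?_ ?_)
        · exact isClosed_le ((continuous_snd.sub continuous_const).norm) continuous_fst
        · exact isClosed_le (continuous_const.add (continuous_const.mul continuous_fst))
            ((Metric.continuous_infDist_pt B).comp continuous_snd)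
      have hK₂cpt : IsCompact K₂ := by
        refine IsCompact.of_isClosed_subset
          ((isCompact_Icc : IsCompact (Icc (0:ℝ) (ε₀ / 4))).prod
          (isCompact_closedBall a' (ε₀ / 4))) hK₂closed ?_
        rintro ⟨t, x⟩ ⟨ht, hx, -⟩
        exact ⟨ht, by rw [mem_closedBall, dist_eq_norm]; exact hx.trans ht.2⟩
      have hScpt : IsCompact (Prod.fst '' K₂) := hK₂cpt.image continuous_fst
      have hSne : (Prod.fst '' K₂).Nonempty := by
        refine ⟨0, ⟨(0, a'), ⟨⟨le_refl 0, hT.le⟩, ?_, ?_⟩, rfl⟩⟩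
        · simp
        · simpa using le_of_eq hb'.2
      obtain ⟨tstar, htmem, htub⟩ := hScpt.exists_isGreatest hSne
      obtain ⟨⟨t₀, w⟩, hK₂mem, ht₀⟩ := htmem
      obtain ⟨ht₀Icc, hwa, hwd⟩ := hK₂mem
      dsimp only at ht₀ ht₀Icc hwa hwd
      have ht₀0 : 0 ≤ t₀ := ht₀Icc.1
      have ht₀T : t₀ ≤ ε₀ / 4 := ht₀Icc.2
      rcases lt_or_ge t₀ (ε₀ / 4) with hlt | hge
      · -- extend: contradiction with maximality
        exfalso
        have hwball : w ∈ closedBall bs ε₀ := by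
          rw [mem_closedBall, dist_eq_norm]
          calc ‖w - bs‖ = ‖(w - a') + (a' - bs)‖ := by rw [sub_add_sub_cancel]
            _ ≤ ‖w - a'‖ + ‖a' - bs‖ := norm_add_le _ _
            _ ≤ t₀ + ε₀ / 4 := add_le_add hwa ha
            _ ≤ ε₀ := by linarith
        obtain ⟨q, hq⟩ := huniq w hwball
        have hqproj : q ∈ projSet B w := by rw [hq]; exact rfl
        have hqB : q ∈ B := hqproj.1
        set D : ℝ := infDist w B with hDdef
        have hDval : ‖w - q‖ = D := hqproj.2
        have hDge : ‖a' - b'‖ + (1 - ε) * t₀ ≤ D := hwd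
        have hDpos : 0 < D := by
          have h1 : (0:ℝ) ≤ (1 - ε) * t₀ := mul_nonneg (by linarith) ht₀0
          linarith
        set u : E := D⁻¹ • (w - q) with hudef
        have hu : ‖u‖ = 1 := by
          rw [hudef, norm_smul, hDval, Real.norm_eq_abs, abs_of_pos (inv_pos.mpr hDpos)]
          field_simp
        obtain ⟨η₀, hη₀pos, hcont⟩ := proj_cont hBc hq (mul_pos hε hDpos)
        set η : ℝ := min (η₀ / 2) (ε₀ / 4 - t₀) with hηdef
        have hηpos : 0 < η := lt_min (by linarith) (by linarith)
        have hηle : η ≤ ε₀ / 4 - t₀ := min_le_right _ _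
        set w' : E := w + η • u with hw'def
        have hw'w : ‖w' - w‖ = η := by
          rw [hw'def, add_sub_cancel_left, norm_smul, hu, Real.norm_eq_abs,
            abs_of_pos hηpos, mul_one]
        obtain ⟨q', hq'⟩ := projSet_nonempty hBc hBne w'
        have hq'B : q' ∈ B := hq'.1
        have hq'close : ‖q' - q‖ < ε * D := by
          apply hcont w' _ q' hq'
          rw [hw'w]
          calc η ≤ η₀ / 2 := min_le_left _ _
            _ < η₀ := by linarith
        have hwq' : D ≤ ‖w - q'‖ := by rw [hDdef]; exact infDist_le_norm' hq'B w
        have hinner1 : ⟪u, w - q⟫ = D := by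
          rw [hudef, real_inner_smul_left, real_inner_self_eq_norm_sq, hDval]
          field_simp
        have hinner2 : -(ε * D) ≤ ⟪u, q - q'⟫ := by
          have hcs : ⟪u, q' - q⟫ ≤ ‖u‖ * ‖q' - q‖ := real_inner_le_norm u (q' - q)
          rw [hu, one_mul] at hcs
          have hneg : ⟪u, q - q'⟫ = -⟪u, q' - q⟫ := by
            rw [← inner_neg_right]; congr 1; abel
          rw [hneg]
          linarith
        have hsplit : ⟪u, w - q'⟫ = ⟪u, w - q⟫ + ⟪u, q - q'⟫ := by
          rw [← inner_add_right]; congr 1; abel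
        have hexp : ‖w' - q'‖ ^ 2 = ‖w - q'‖ ^ 2 + 2 * (η * ⟪u, w - q'⟫) + η ^ 2 := by
          have h1 : w' - q' = (w - q') + η • u := by rw [hw'def]; abel
          have h2 : ⟪w - q', η • u⟫ = η * ⟪u, w - q'⟫ := by
            rw [real_inner_smul_right, real_inner_comm]
          have h3 : ‖η • u‖ ^ 2 = η ^ 2 := by
            rw [norm_smul, hu, Real.norm_eq_abs, abs_of_pos hηpos, mul_one]
          rw [h1, norm_add_sq_real, h2, h3]
        have hip : D - ε * D ≤ ⟪u, w - q'⟫ := by rw [hsplit, hinner1]; linarith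
        have hkey : (D + (1 - ε) * η) ^ 2 ≤ ‖w' - q'‖ ^ 2 := by
          have hsq : D ^ 2 ≤ ‖w - q'‖ ^ 2 := by nlinarith [hDpos.le]
          have e1 : 2 * (η * (D - ε * D)) ≤ 2 * (η * ⟪u, w - q'⟫) := by
            have := mul_le_mul_of_nonneg_left hip hηpos.le
            linarith
          have e2 : (1 - ε) ^ 2 * η ^ 2 ≤ η ^ 2 := by
            have h4 : (1 - ε) ^ 2 ≤ 1 := by nlinarith
            nlinarith [sq_nonneg η, mul_le_mul_of_nonneg_right h4 (sq_nonneg η)]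
          nlinarith [hexp, hsq, e1, e2]
        have hd' : D + (1 - ε) * η ≤ infDist w' B := by
          have h2 : (0:ℝ) ≤ D + (1 - ε) * η := by nlinarith [hDpos.le, hηpos.le]
          have h3 : D + (1 - ε) * η = Real.sqrt ((D + (1 - ε) * η) ^ 2) :=
            (Real.sqrt_sq h2).symm
          rw [h3, ← hq'.2]
          calc Real.sqrt ((D + (1 - ε) * η) ^ 2) ≤ Real.sqrt (‖w' - q'‖ ^ 2) :=
              Real.sqrt_le_sqrt hkey
            _ = ‖w' - q'‖ := Real.sqrt_sq (norm_nonneg _)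
        have hmem' : (t₀ + η) ∈ Prod.fst '' K₂ := by
          refine ⟨(t₀ + η, w'), ⟨⟨?_, ?_⟩, ?_, ?_⟩, rfl⟩
          · show (0:ℝ) ≤ t₀ + η
            linarith
          · show t₀ + η ≤ ε₀ / 4
            linarith
          · show ‖w' - a'‖ ≤ t₀ + η
            calc ‖w' - a'‖ = ‖(w' - w) + (w - a')‖ := by rw [sub_add_sub_cancel]
              _ ≤ ‖w' - w‖ + ‖w - a'‖ := norm_add_le _ _
              _ ≤ η + t₀ := by rw [hw'w]; linarith
              _ = t₀ + η := by ring
          · show ‖a' - b'‖ + (1 - ε) * (t₀ + η) ≤ infDist w' B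
            calc ‖a' - b'‖ + (1 - ε) * (t₀ + η)
                = (‖a' - b'‖ + (1 - ε) * t₀) + (1 - ε) * η := by ring
              _ ≤ D + (1 - ε) * η := by linarith
              _ ≤ infDist w' B := hd'
        have hcontra := htub hmem'
        rw [← ht₀] at hcontra
        linarith
      · -- t₀ = ε₀/4
        have ht₀eq : t₀ = ε₀ / 4 := le_antisymm ht₀T hge
        exact ⟨w, ht₀eq ▸ hwa, ht₀eq ▸ hwd⟩
    -- Step B : limit ε → 0
    have stepB : ∃ w, ‖w - a'‖ ≤ ε₀ / 4 ∧ ‖a' - b'‖ + ε₀ / 4 ≤ infDist w B := by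
      have h : ∀ m : ℕ, ∃ w, ‖w - a'‖ ≤ ε₀ / 4 ∧
          ‖a' - b'‖ + (1 - 1 / (m + 2)) * (ε₀ / 4) ≤ infDist w B := by
        intro m
        refine stepA (1 / (m + 2)) (by positivity) ?_
        rw [div_lt_one (by positivity)]
        have : (0:ℝ) ≤ m := Nat.cast_nonneg m
        linarith
      choose wseq hw1 hw2 using h
      have hmem : ∀ m, wseq m ∈ closedBall a' (ε₀ / 4) := fun m => by
        rw [mem_closedBall, dist_eq_norm]; exact hw1 m
      obtain ⟨wlim, hwlimmem, φ, hφ, hconv⟩ :=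
        (isCompact_closedBall a' (ε₀ / 4)).tendsto_subseq hmem
      have hφge : ∀ k : ℕ, (k : ℝ) ≤ (φ k : ℝ) := fun k => by exact_mod_cast hφ.le_apply
      refine ⟨wlim, by rw [← dist_eq_norm, ← mem_closedBall]; exact hwlimmem, ?_⟩
      have hlim1 : Tendsto (fun k => infDist (wseq (φ k)) B) atTop (𝓝 (infDist wlim B)) :=
        ((Metric.continuous_infDist_pt B).tendsto wlim).comp hconv
      have hzero : Tendsto (fun k : ℕ => (1 : ℝ) / (φ k + 2)) atTop (𝓝 0) := by
        apply squeeze_zero (fun k => by positivity) (g := fun k : ℕ => (1:ℝ)/(k+1))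
        · intro k
          apply div_le_div_of_nonneg_left one_pos.le (by positivity)
          have := hφge k; linarith
        · exact tendsto_one_div_add_atTop_nhds_zero_nat
      have hlim2 : Tendsto (fun k : ℕ => ‖a' - b'‖ + (1 - 1 / ((φ k : ℝ) + 2)) * (ε₀ / 4))
          atTop (𝓝 (‖a' - b'‖ + (1 - 0) * (ε₀ / 4))) :=
        tendsto_const_nhds.add ((tendsto_const_nhds.sub hzero).mul tendsto_const_nhds)
      have hle : ∀ k, ‖a' - b'‖ + (1 - 1 / ((φ k : ℝ) + 2)) * (ε₀ / 4)
          ≤ infDist (wseq (φ k)) B := fun k => hw2 (φ k)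
      have hfin := le_of_tendsto_of_tendsto' hlim2 hlim1 hle
      simpa using hfin
    -- Step C : rigidity
    obtain ⟨w, hwT, hwd⟩ := stepB
    have hdb' : infDist w B ≤ ‖w - b'‖ := infDist_le_norm' hb'.1 w
    have hwb'le : ‖w - b'‖ ≤ ε₀ / 4 + ‖a' - b'‖ := by
      calc ‖w - b'‖ = ‖(w - a') + (a' - b')‖ := by rw [sub_add_sub_cancel]
        _ ≤ ‖w - a'‖ + ‖a' - b'‖ := norm_add_le _ _
        _ ≤ ε₀ / 4 + ‖a' - b'‖ := by linarith
    have h1 : ‖w - b'‖ = ‖a' - b'‖ + ε₀ / 4 := by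
      have hge2 : ‖a' - b'‖ + ε₀ / 4 ≤ ‖w - b'‖ := le_trans hwd hdb'
      linarith
    have h2 : ‖w - a'‖ = ε₀ / 4 := by
      have hge2 : ε₀ / 4 ≤ ‖w - a'‖ := by
        have htr : ‖w - b'‖ ≤ ‖w - a'‖ + ‖a' - b'‖ := by
          calc ‖w - b'‖ = ‖(w - a') + (a' - b')‖ := by rw [sub_add_sub_cancel]
            _ ≤ ‖w - a'‖ + ‖a' - b'‖ := norm_add_le _ _
        rw [h1] at htr; linarith
      linarith
    have hX : ⟪w - a', a' - b'⟫ = (ε₀ / 4) * ‖a' - b'‖ := by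
      have hexp : ‖(w - a') + (a' - b')‖ ^ 2
          = ‖w - a'‖ ^ 2 + 2 * ⟪w - a', a' - b'⟫ + ‖a' - b'‖ ^ 2 := norm_add_sq_real _ _
      rw [sub_add_sub_cancel, h1, h2] at hexp
      nlinarith [hexp]
    have hcol : ‖a' - b'‖ • (w - a') = ‖w - a'‖ • (a' - b') := by
      rw [← inner_eq_norm_mul_iff_real, hX, h2]
    have hwb'eq : ‖a' - b'‖ • (w - b') = (‖a' - b'‖ + ε₀ / 4) • (a' - b') := by
      have hs : ‖a' - b'‖ • (w - b') = ‖a' - b'‖ • (w - a') + ‖a' - b'‖ • (a' - b') := by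
        rw [← smul_add]; congr 1; abel
      rw [hs, hcol, h2, ← add_smul]
      congr 1
      ring
    -- Step D : final inequality
    have hball : ‖a' - b'‖ + ε₀ / 4 ≤ ‖w - b‖ := le_trans hwd (infDist_le_norm' hbB w)
    have hsq : (‖a' - b'‖ + ε₀ / 4) ^ 2 ≤ ‖w - b‖ ^ 2 :=
      pow_le_pow_left₀ (by linarith) hball 2
    have hexp2 : ‖w - b‖ ^ 2 = ‖w - b'‖ ^ 2 - 2 * ⟪w - b', b - b'⟫ + ‖b - b'‖ ^ 2 := by
      have hdiff : w - b = (w - b') - (b - b') := by abel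
      rw [hdiff, norm_sub_sq_real]
    have hkey2 : 2 * ⟪w - b', b - b'⟫ ≤ ‖b - b'‖ ^ 2 := by
      rw [h1] at hexp2
      nlinarith [hsq, hexp2]
    have hinnerrel : ‖a' - b'‖ * ⟪w - b', b - b'⟫
        = (‖a' - b'‖ + ε₀ / 4) * ⟪a' - b', b - b'⟫ := by
      rw [← real_inner_smul_left, hwb'eq, real_inner_smul_left]
    rcases le_or_gt 0 ⟪a' - b', b - b'⟫ with hpos | hneg
    · have hstep : (‖a' - b'‖ + ε₀ / 4) * ⟪a' - b', b - b'⟫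
          ≤ ‖a' - b'‖ * ‖b - b'‖ ^ 2 / 2 := by
        rw [← hinnerrel]
        nlinarith [mul_le_mul_of_nonneg_left hkey2 hRpos.le]
      rw [le_div_iff₀ (by linarith : (0:ℝ) < 2 * (ε₀ / 4))]
      calc ⟪a' - b', b - b'⟫ * (2 * (ε₀ / 4))
          ≤ ⟪a' - b', b - b'⟫ * (2 * (‖a' - b'‖ + ε₀ / 4)) := by
            apply mul_le_mul_of_nonneg_left _ hpos
            linarith
        _ = 2 * ((‖a' - b'‖ + ε₀ / 4) * ⟪a' - b', b - b'⟫) := by ring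
        _ ≤ 2 * (‖a' - b'‖ * ‖b - b'‖ ^ 2 / 2) := by linarith
        _ = ‖a' - b'‖ * ‖b - b'‖ ^ 2 := by ring
    · exact le_trans hneg.le
        (div_nonneg (mul_nonneg (norm_nonneg _) (sq_nonneg _)) (by linarith))

theorem stmt8 {n : ℕ} (A B : Set (EuclideanSpace ℝ (Fin n)))
    (hAne : A.Nonempty) (hBne : B.Nonempty) (hAc : IsClosed A) (hBc : IsClosed B)
    (bs : EuclideanSpace ℝ (Fin n)) (hbs : bs ∈ A ∩ B)
    (hprox : ProxRegularAt B bs) :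
    ∀ σ : ℝ, 0 ≤ σ → σ < 1 → ∀ cbar : ℝ, 0 < cbar →
      ∃ c : ℝ, 0 < c ∧ c < cbar ∧ HolderRegular A B bs σ c := by
  intro σ hσ0 hσ1 cbar hcbar
  obtain ⟨U, hU, hUuniq⟩ := hprox
  obtain ⟨ε₀, hε₀, hball⟩ := Metric.nhds_basis_closedBall.mem_iff.mp hU
  have huniq : ∀ y ∈ closedBall bs ε₀, ∃ p, projSet B y = {p} :=
    fun y hy => hUuniq y (hball hy)
  set c : ℝ := cbar / 2 with hcdef
  have hcpos : 0 < c := by positivity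
  refine ⟨c, hcpos, by rw [hcdef]; linarith, ?_⟩
  have hscpos : 0 < Real.sqrt c := Real.sqrt_pos.mpr hcpos
  set T : ℝ := ε₀ / 4 with hTdef
  have hT : 0 < T := by rw [hTdef]; linarith
  set A0 : ℝ := 2 * T * Real.sqrt c / (2 + c) with hA0def
  have hA0 : 0 < A0 := by rw [hA0def]; positivity
  have hexppos : 0 < 1 - σ := by linarith
  set δ : ℝ := min (ε₀ / 8) (A0 ^ ((1:ℝ) / (1 - σ)) / 2) with hδdef
  have hδpos : 0 < δ := by
    rw [hδdef]
    exact lt_min (by linarith) (by positivity)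
  refine ⟨ball bs δ, ball_mem_nhds _ hδpos, ?_⟩
  rintro a' ⟨ha'A, ha'U⟩ b' ⟨hb'proj, hb'U⟩ b hbB hbnear hbprojA
  have ha'bs : ‖a' - bs‖ < δ := by rw [← dist_eq_norm]; exact mem_ball.mp ha'U
  have hb'bs : ‖b' - bs‖ < δ := by rw [← dist_eq_norm]; exact mem_ball.mp hb'U
  have hδε : δ ≤ ε₀ / 8 := min_le_left _ _
  have hmain := reach_ineq hBc hBne hε₀ huniq
    (le_trans ha'bs.le (by rw [hTdef] at *; linarith)) hb'proj b hbB
  -- r ≤ 2δ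
  have hr2δ : ‖a' - b'‖ ≤ 2 * δ := by
    calc ‖a' - b'‖ = ‖(a' - bs) + (bs - b')‖ := by rw [sub_add_sub_cancel]
      _ ≤ ‖a' - bs‖ + ‖bs - b'‖ := norm_add_le _ _
      _ = ‖a' - bs‖ + ‖b' - bs‖ := by rw [norm_sub_rev bs b']
      _ ≤ 2 * δ := by linarith
  rcases eq_or_lt_of_le (norm_nonneg (a' - b')) with hr0 | hrpos
  · -- degenerate: a' = b' and b = a'
    have hab : a' - b' = 0 := by rwa [eq_comm, norm_eq_zero] at hr0
    have hba : b - a' = 0 := by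
      have h1 : ‖b - a'‖ ≤ 0 := by
        have := hbnear
        rw [← hr0, mul_zero] at this
        exact this
      have h2 : (0:ℝ) ≤ ‖b - a'‖ := norm_nonneg _
      rw [← norm_eq_zero]; linarith
  -- b - b' = (b - a') + (a' - b') = 0
    have hbb' : b - b' = 0 := by
      have : b - b' = (b - a') + (a' - b') := by abel
      rw [this, hba, hab, add_zero]
    rw [hab, hbb', inner_zero_left, norm_zero, mul_zero]
  · -- main case
    have hm : ‖b - b'‖ ≤ (2 + c) * ‖a' - b'‖ := by
      calc ‖b - b'‖ = ‖(b - a') + (a' - b')‖ := by rw [sub_add_sub_cancel]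
        _ ≤ ‖b - a'‖ + ‖a' - b'‖ := norm_add_le _ _
        _ ≤ (1 + c) * ‖a' - b'‖ + ‖a' - b'‖ := by linarith [hbnear]
        _ = (2 + c) * ‖a' - b'‖ := by ring
    -- numeric key : (2+c) * r^(1-σ) ≤ 2*T*√c
    have hnum : (2 + c) * ‖a' - b'‖ ^ ((1:ℝ) - σ) ≤ 2 * T * Real.sqrt c := by
      have h1 : ‖a' - b'‖ ^ ((1:ℝ) - σ) ≤ (2 * δ) ^ ((1:ℝ) - σ) :=
        Real.rpow_le_rpow (norm_nonneg _) hr2δ (by linarith)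
      have h2δA : 2 * δ ≤ A0 ^ ((1:ℝ) / (1 - σ)) := by
        have := min_le_right (ε₀ / 8) (A0 ^ ((1:ℝ) / (1 - σ)) / 2)
        rw [hδdef]; linarith [this]
      have h2 : (2 * δ) ^ ((1:ℝ) - σ) ≤ A0 := by
        calc (2 * δ) ^ ((1:ℝ) - σ) ≤ (A0 ^ ((1:ℝ) / (1 - σ))) ^ ((1:ℝ) - σ) :=
            Real.rpow_le_rpow (by linarith) h2δA (by linarith)
          _ = A0 := by
            rw [← Real.rpow_mul hA0.le, one_div, inv_mul_cancel₀ (by linarith : (1:ℝ) - σ ≠ 0),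
              Real.rpow_one]
      have h3 : (2 + c) * A0 = 2 * T * Real.sqrt c := by
        rw [hA0def]
        field_simp
      calc (2 + c) * ‖a' - b'‖ ^ ((1:ℝ) - σ) ≤ (2 + c) * A0 :=
          mul_le_mul_of_nonneg_left (h1.trans h2) (by linarith)
        _ = 2 * T * Real.sqrt c := h3
    -- power splitting : r^2 = r^(σ+1) * r^(1-σ)
    have hpow : ‖a' - b'‖ ^ (2:ℕ) = ‖a' - b'‖ ^ (σ + 1) * ‖a' - b'‖ ^ ((1:ℝ) - σ) := by
      rw [← Real.rpow_add hrpos]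
      have : σ + 1 + (1 - σ) = (2:ℝ) := by ring
      rw [this]
      rw [show ((2:ℝ)) = ((2:ℕ) : ℝ) by norm_num, Real.rpow_natCast]
    have hP : 0 < ‖a' - b'‖ ^ (σ + 1) := Real.rpow_pos_of_pos hrpos _
    -- final chain
    refine le_trans hmain ?_
    rw [div_le_iff₀ (by linarith : (0:ℝ) < 2 * (ε₀ / 4))]
    have hveq : ‖b - b'‖ ^ 2 ≤ (2 + c) * ‖a' - b'‖ * ‖b - b'‖ := by
      nlinarith [hm, norm_nonneg (b - b'), norm_nonneg (a' - b')]
    have hTe : 2 * (ε₀ / 4) = 2 * T := by rw [hTdef]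
    rw [hTe]
    -- goal : r * ‖b-b'‖^2 ≤ √c * r^(σ+1) * ‖b-b'‖ * (2*T)
    have hbig : ‖a' - b'‖ * ‖b - b'‖ ^ 2 ≤ (2 + c) * ‖a' - b'‖ ^ (2:ℕ) * ‖b - b'‖ := by
      calc ‖a' - b'‖ * ‖b - b'‖ ^ 2 ≤ ‖a' - b'‖ * ((2 + c) * ‖a' - b'‖ * ‖b - b'‖) :=
          mul_le_mul_of_nonneg_left hveq (norm_nonneg _)
        _ = (2 + c) * ‖a' - b'‖ ^ (2:ℕ) * ‖b - b'‖ := by ring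
    have hbig2 : (2 + c) * ‖a' - b'‖ ^ (2:ℕ) ≤ 2 * T * Real.sqrt c * ‖a' - b'‖ ^ (σ + 1) := by
      rw [hpow]
      calc (2 + c) * (‖a' - b'‖ ^ (σ + 1) * ‖a' - b'‖ ^ ((1:ℝ) - σ))
          = ((2 + c) * ‖a' - b'‖ ^ ((1:ℝ) - σ)) * ‖a' - b'‖ ^ (σ + 1) := by ring
        _ ≤ (2 * T * Real.sqrt c) * ‖a' - b'‖ ^ (σ + 1) :=
            mul_le_mul_of_nonneg_right hnum hP.le
        _ = 2 * T * Real.sqrt c * ‖a' - b'‖ ^ (σ + 1) := by ring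
    calc ‖a' - b'‖ * ‖b - b'‖ ^ 2 ≤ (2 + c) * ‖a' - b'‖ ^ (2:ℕ) * ‖b - b'‖ := hbig
      _ ≤ (2 * T * Real.sqrt c * ‖a' - b'‖ ^ (σ + 1)) * ‖b - b'‖ :=
          mul_le_mul_of_nonneg_right hbig2 (norm_nonneg _)
      _ = Real.sqrt c * ‖a' - b'‖ ^ (σ + 1) * ‖b - b'‖ * (2 * T) := by ring
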